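/- arXiv:2112.02375 — 8 statements merged into one kernel-verified Lean document; each statement's English description precedes it below -/
import Mathlib

section
/- Let N ≥ 1 and let A = [a_{jk}] be a real N×N matrix whose off-diagonal entries are nonnegative and each of whose columns sums to zero (Σ_k a_{ki} = 0 for every i). Fix an index i and let ψ := diag(A e_i) − A·diag(e_i) − diag(e_i)·Aᵀ. Then ψ is a symmetric positive semidefinite matrix. -/
open Matrix

/-- If `A` is a rate matrix (nonnegative off-diagonal entries, columns
summing to zero), then `ψ := diag(A e_i) − A·diag(e_i) − diag(e_i)·Aᵀ` is a symmetric
positive semidefinite matrix. -/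
theorem stmt_1 (N : ℕ) (hN : 1 ≤ N) (A : Matrix (Fin N) (Fin N) ℝ)
    (hoffdiag : ∀ j k : Fin N, j ≠ k → 0 ≤ A j k)
    (hcol : ∀ i : Fin N, ∑ k : Fin N, A k i = 0)
    (i : Fin N) (X : Fin N → ℝ) (hX : X = Pi.single i 1)
    (ψ : Matrix (Fin N) (Fin N) ℝ)
    (hψ : ψ = Matrix.diagonal (A.mulVec X) - A * Matrix.diagonal X - Matrix.diagonal X * Aᵀ) :
    ψ.IsSymm ∧ ψ.PosSemidef := by
  have hent : ∀ j k, ψ j k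
      = (if j = k then A j i else 0) - (if k = i then A j i else 0)
        - (if j = i then A k i else 0) := by
    intro j k
    subst hX hψ
    simp [Matrix.sub_apply, Matrix.diagonal_apply, Matrix.mul_apply, Matrix.mulVec,
      dotProduct, Pi.single_apply, mul_ite, ite_mul, Matrix.transpose_apply, eq_comm]
    split_ifs <;> simp_all
  have hsymm : ψ.IsSymm := by
    apply Matrix.IsSymm.ext
    intro j k
    rw [hent, hent]
    rcases eq_or_ne j k with h | h
    · subst h; ring
    · simp only [h, h.symm, if_neg, if_false, zero_sub]
      ring
  refine ⟨hsymm, ?_⟩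
  have hherm : ψ.IsHermitian := by
    rw [Matrix.IsHermitian]
    ext j k
    simpa using congrFun (congrFun hsymm j) k
  refine Matrix.posSemidef_iff_dotProduct_mulVec.mpr ⟨hherm, ?_⟩
  intro x
  have h1 : ∀ j, ∑ k, ψ j k * x k
      = A j i * x j - A j i * x i - (if j = i then ∑ k, A k i * x k else 0) := by
    intro j
    simp only [hent, sub_mul, ite_mul, zero_mul]
    rw [Finset.sum_sub_distrib, Finset.sum_sub_distrib, Finset.sum_ite_eq,
      Finset.sum_ite_eq']
    simp only [Finset.mem_univ, if_true]
    rcases eq_or_ne j i with h | h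
    · simp [h]
    · simp [h]
  have hquad : star x ⬝ᵥ ψ.mulVec x
      = ∑ j, A j i * (x j - x i) ^ 2 := by
    have hlhs : star x ⬝ᵥ ψ.mulVec x
        = ∑ j, x j * (A j i * x j - A j i * x i)
          - x i * ∑ k, A k i * x k := by
      simp only [dotProduct, Matrix.mulVec, star_trivial, Pi.star_apply]
      calc ∑ j, x j * ∑ k, ψ j k * x k
          = ∑ j, (x j * (A j i * x j - A j i * x i)
              - x j * (if j = i then ∑ k, A k i * x k else 0)) := by
            apply Finset.sum_congr rfl
            intro j _
            rw [h1 j]; ring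
        _ = ∑ j, x j * (A j i * x j - A j i * x i)
              - ∑ j, x j * (if j = i then ∑ k, A k i * x k else 0) := by
            rw [Finset.sum_sub_distrib]
        _ = ∑ j, x j * (A j i * x j - A j i * x i) - x i * ∑ k, A k i * x k := by
            congr 1
            simp only [mul_ite, mul_zero]
            rw [Finset.sum_ite_eq' Finset.univ i (fun j => x j * ∑ k, A k i * x k)]
            simp
    rw [hlhs]
    have hrhs : ∑ j, A j i * (x j - x i) ^ 2
        = ∑ j, (x j * (A j i * x j - A j i * x i) - x i * (A j i * x j))
          + x i ^ 2 * ∑ j, A j i := by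
      rw [Finset.mul_sum, ← Finset.sum_add_distrib]
      apply Finset.sum_congr rfl
      intro j _
      ring
    rw [hrhs, hcol i, mul_zero, add_zero, Finset.sum_sub_distrib, ← Finset.mul_sum]
  rw [hquad]
  apply Finset.sum_nonneg
  intro j _
  rcases eq_or_ne j i with h | h
  · subst h; simp
  · exact mul_nonneg (hoffdiag j i h) (sq_nonneg _)
end

section
/- Let N ≥ 1, let c ∈ (0,1), and let A = [a_{jk}] be a real N×N matrix with a_{jk} ∈ [c, c⁻¹] for all j ≠ k and each column summing to zero (Σ_k a_{ki} = 0 for every i). Fix an index i and let ψ := diag(A e_i) − A·diag(e_i) − diag(e_i)·Aᵀ. Then for z ∈ ℝ^N, zᵀ ψ z = 0 if and only if z is a constant vector, i.e. z_k = z_i for all k (equivalently, z is a scalar multiple of the all-ones vector). -/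
open Matrix

private lemma stmt3_key (N : ℕ) (A : Matrix (Fin N) (Fin N) ℝ) (i : Fin N)
    (hcol : ∑ k : Fin N, A k i = 0) (z : Fin N → ℝ) :
    z ⬝ᵥ ((Matrix.diagonal (A.mulVec (Pi.single i 1)) - A * Matrix.diagonal (Pi.single i 1)
      - Matrix.diagonal (Pi.single i 1) * Aᵀ).mulVec z)
    = ∑ k, A k i * (z k - z i)^2 := by
  simp only [dotProduct, mulVec, Matrix.sub_apply, Matrix.mul_apply, Matrix.diagonal_apply,
    Pi.single_apply, Matrix.transpose_apply]
  simp only [sub_mul, mul_sub, Finset.sum_sub_distrib, Finset.sum_ite_eq, Finset.sum_ite_eq',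
    mul_ite, ite_mul, mul_zero, zero_mul, Finset.mem_univ, if_true, sub_sq, mul_add,
    Finset.sum_add_distrib, Finset.sum_ite_irrel, Finset.sum_const_zero]
  have h1 : ∑ x : Fin N, A x i * z i ^ 2 = 0 := by
    rw [← Finset.sum_mul, hcol, zero_mul]
  have h2 : ∑ x : Fin N, A x i * (2 * z x * z i) = (2 * z i) * ∑ x : Fin N, A x i * z x := by
    rw [Finset.mul_sum]; apply Finset.sum_congr rfl; intros; ring
  have e1 : ∑ x : Fin N, z x * (A x i * 1 * z x) = ∑ x : Fin N, A x i * z x ^ 2 := by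
    apply Finset.sum_congr rfl; intros; ring
  have e2 : ∑ x : Fin N, z x * (A x i * 1 * z i) = z i * ∑ x : Fin N, A x i * z x := by
    rw [Finset.mul_sum]; apply Finset.sum_congr rfl; intros; ring
  have e3 : ∑ x : Fin N, 1 * A x i * z x = ∑ x : Fin N, A x i * z x := by
    apply Finset.sum_congr rfl; intros; ring
  rw [h1, h2, e1, e2, e3]; ring

/-- With `a_{jk} ∈ [c, c⁻¹]` off the diagonal (for some `c ∈ (0,1)`) and
columns of `A` summing to zero, for `ψ := diag(A e_i) − A·diag(e_i) − diag(e_i)·Aᵀ`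
and `z ∈ ℝ^N` we have `zᵀ ψ z = 0` iff `z` is a constant vector. -/
theorem stmt_3 (N : ℕ) (hN : 1 ≤ N) (c : ℝ) (hc : c ∈ Set.Ioo (0 : ℝ) 1)
    (A : Matrix (Fin N) (Fin N) ℝ)
    (hbound : ∀ j k : Fin N, j ≠ k → A j k ∈ Set.Icc c c⁻¹)
    (hcol : ∀ i : Fin N, ∑ k : Fin N, A k i = 0)
    (i : Fin N) (X : Fin N → ℝ) (hX : X = Pi.single i 1)
    (ψ : Matrix (Fin N) (Fin N) ℝ)
    (hψ : ψ = Matrix.diagonal (A.mulVec X) - A * Matrix.diagonal X - Matrix.diagonal X * Aᵀ) :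
    ∀ z : Fin N → ℝ, (z ⬝ᵥ ψ.mulVec z = 0 ↔ ∀ k : Fin N, z k = z i) := by
  intro z
  subst hX hψ
  rw [stmt3_key N A i (hcol i) z]
  have hterm : ∀ k : Fin N, 0 ≤ A k i * (z k - z i)^2 := by
    intro k
    by_cases hk : k = i
    · subst hk; simp
    · exact mul_nonneg (le_trans hc.1.le (hbound k i hk).1) (sq_nonneg _)
  constructor
  · intro h0 k
    by_cases hk : k = i
    · subst hk; rfl
    · have := (Finset.sum_eq_zero_iff_of_nonneg (fun k _ => hterm k)).1 h0 k (Finset.mem_univ k)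
      have hA : 0 < A k i := lt_of_lt_of_le hc.1 (hbound k i hk).1
      have : (z k - z i)^2 = 0 := by
        rcases mul_eq_zero.1 this with h | h
        · exact absurd h hA.ne'
        · exact h
      have hz : z k - z i = 0 := by
        have := sq_abs (z k - z i) ▸ this
        nlinarith [sq_nonneg (z k - z i)]
      linarith
  · intro h
    apply Finset.sum_eq_zero
    intro k _
    rw [h k]
    simp
end

section
/- Let N ≥ 1, let A = [a_{jk}] be any real N×N matrix, fix an index i, and let ψ := diag(A e_i) − A·diag(e_i) − diag(e_i)·Aᵀ. Let ψ⁺ be a Moore–Penrose inverse of ψ, i.e. an N×N real matrix satisfying ψψ⁺ψ = ψ, ψ⁺ψψ⁺ = ψ⁺, (ψψ⁺)ᵀ = ψψ⁺ and (ψ⁺ψ)ᵀ = ψ⁺ψ. Then for every index j such that e_jᵀ A e_i ≠ 0, one has ψψ⁺(e_j − e_i) = ψ⁺ψ(e_j − e_i) = e_j − e_i. -/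
open Matrix

/-- For any real `N×N` matrix `A`,
`ψ := diag(A e_i) − A·diag(e_i) − diag(e_i)·Aᵀ`, and any Moore–Penrose inverse `ψ⁺`
of `ψ` (satisfying the four Penrose equations), for every index `j` with
`e_jᵀ A e_i ≠ 0` we have `ψψ⁺(e_j − e_i) = ψ⁺ψ(e_j − e_i) = e_j − e_i`. -/
theorem stmt_7 (N : ℕ) (hN : 1 ≤ N) (A : Matrix (Fin N) (Fin N) ℝ)
    (i : Fin N) (X : Fin N → ℝ) (hX : X = Pi.single i 1)
    (ψ ψp : Matrix (Fin N) (Fin N) ℝ)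
    (hψ : ψ = Matrix.diagonal (A.mulVec X) - A * Matrix.diagonal X - Matrix.diagonal X * Aᵀ)
    (h1 : ψ * ψp * ψ = ψ) (h2 : ψp * ψ * ψp = ψp)
    (h3 : (ψ * ψp)ᵀ = ψ * ψp) (h4 : (ψp * ψ)ᵀ = ψp * ψ) :
    ∀ j : Fin N, A j i ≠ 0 →
      (ψ * ψp).mulVec ((Pi.single j 1 : Fin N → ℝ) - Pi.single i 1) =
        (Pi.single j 1 : Fin N → ℝ) - Pi.single i 1 ∧
      (ψp * ψ).mulVec ((Pi.single j 1 : Fin N → ℝ) - Pi.single i 1) =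
        (Pi.single j 1 : Fin N → ℝ) - Pi.single i 1 := by
  intro j hj
  by_cases hji : j = i
  · subst hji; simp
  -- symmetry of ψ
  have hsym : ψᵀ = ψ := by
    subst hψ
    simp only [transpose_sub, transpose_mul, transpose_transpose, diagonal_transpose,
      diagonal_conjTranspose]
    rw [sub_sub, sub_sub, add_comm]
  -- key column computation
  have key : ψ.mulVec (Pi.single j 1) = A j i • ((Pi.single j 1 : Fin N → ℝ) - Pi.single i 1) := by
    subst hψ hX
    funext k
    simp only [mulVec, dotProduct, Matrix.sub_apply, mul_apply, diagonal_apply, transpose_apply,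
      Pi.smul_apply, Pi.sub_apply, Pi.single_apply, smul_eq_mul]
    rw [Finset.sum_eq_single j]
    · by_cases hkj : k = j <;> by_cases hki : k = i <;>
        simp_all [Matrix.mulVec, dotProduct, Pi.single_apply, Finset.mul_sum] <;>
        · rw [Finset.sum_eq_single i] <;> intros <;> simp_all
    · intro b _ hb; simp [hb]
    · simp
  have hv : ((Pi.single j 1 : Fin N → ℝ) - Pi.single i 1)
      = (A j i)⁻¹ • ψ.mulVec (Pi.single j 1) := by
    rw [key, smul_smul, inv_mul_cancel₀ hj, one_smul]
  -- transposed first Penrose equation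
  have t : ψ * ψpᵀ * ψ = ψ := by
    have := congrArg Matrix.transpose h1
    simp only [transpose_mul] at this
    rw [hsym] at this
    rw [mul_assoc]; exact this
  have h4' : ψp * ψ = ψ * ψpᵀ := by
    conv_lhs => rw [← h4]
    rw [transpose_mul, hsym]
  have hps : ψp * ψ * ψ = ψ := by rw [h4', t]
  constructor
  · rw [hv, mulVec_smul, mulVec_mulVec, h1, ← hv]
  · rw [hv, mulVec_smul, mulVec_mulVec, hps, ← hv]
end

section
/- Let N ≥ 1, let c ∈ (0,1), and let A = [a_{jk}] be a real N×N matrix with a_{jk} ∈ [c, c⁻¹] for all j ≠ k and each column summing to zero (Σ_k a_{ki} = 0 for every i). Fix an index i (write X = e_i) and let ψ := diag(AX) − A·diag(X) − diag(X)·Aᵀ, with ‖z‖_X := √(zᵀψz). Let z ∈ ℝ^N satisfy ‖z‖_X ≠ 0, and let ε satisfy 0 < ε < c^{3/2} N^{−3/2}. If zᵀ ψ e_j ≥ −ε‖z‖_X for all j = 1,…,N, then zᵀ ψ X ≤ −ε‖z‖_X. -/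
open Matrix

lemma quad_form {N : ℕ} (A : Matrix (Fin N) (Fin N) ℝ) (i : Fin N)
    (hcol : ∑ k, A k i = 0) (z v : Fin N → ℝ) :
    z ⬝ᵥ ((Matrix.diagonal (A.mulVec (Pi.single i 1)) - A * Matrix.diagonal (Pi.single i 1)
      - Matrix.diagonal (Pi.single i 1) * Aᵀ).mulVec v)
    = ∑ j, A j i * (z j - z i) * (v j - v i) := by
  have hmv : ∀ j, ((Matrix.diagonal (A.mulVec (Pi.single i 1)) - A * Matrix.diagonal (Pi.single i 1)
      - Matrix.diagonal (Pi.single i 1) * Aᵀ).mulVec v) j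
      = A j i * v j - A j i * v i - (if j = i then ∑ k, A k i * v k else 0) := by
    intro j
    simp only [Matrix.mulVec, dotProduct, Matrix.sub_apply, Matrix.mul_apply,
      Matrix.diagonal_apply, Pi.single_apply, Matrix.transpose_apply,
      Matrix.mulVec_single, mul_ite, ite_mul, mul_zero, zero_mul, mul_one,
      sub_mul, Finset.sum_sub_distrib, Finset.sum_ite_eq, Finset.sum_ite_eq',
      Finset.mem_univ, if_true]
    by_cases h : j = i <;> simp [h]
  calc z ⬝ᵥ ((Matrix.diagonal (A.mulVec (Pi.single i 1)) - A * Matrix.diagonal (Pi.single i 1)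
      - Matrix.diagonal (Pi.single i 1) * Aᵀ).mulVec v)
      = ∑ j, (z j * (A j i * v j) - z j * (A j i * v i)
          - (if j = i then z i * ∑ k, A k i * v k else 0)) := by
        simp only [dotProduct, hmv]
        refine Finset.sum_congr rfl fun j _ => ?_
        by_cases h : j = i <;> simp [h] <;> try ring
    _ = ∑ j, (z j * (A j i * v j) - z j * (A j i * v i)) - z i * ∑ k, A k i * v k := by
        rw [Finset.sum_sub_distrib, Finset.sum_ite_eq' Finset.univ i
          (fun _ => z i * ∑ k, A k i * v k)]
        simp
    _ = ∑ j, A j i * (z j - z i) * (v j - v i) := by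
        rw [Finset.mul_sum, ← Finset.sum_sub_distrib]
        have h0 : (∑ j, A j i * (z i * v i)) = 0 := by
          rw [← Finset.sum_mul, hcol, zero_mul]
        calc ∑ j, (z j * (A j i * v j) - z j * (A j i * v i) - z i * (A j i * v j))
            = (∑ j, (A j i * (z j - z i) * (v j - v i))) - ∑ j, A j i * (z i * v i) := by
              rw [← Finset.sum_sub_distrib]
              exact Finset.sum_congr rfl fun j _ => by ring
          _ = _ := by rw [h0]; ring

lemma rpow_eq' {c : ℝ} (hc : 0 < c) {N : ℕ} (hN : 1 ≤ N) :
    c ^ ((3 : ℝ) / 2) * (N : ℝ) ^ (-(3 : ℝ) / 2) = (c / N) * Real.sqrt (c / N) := by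
  have hNpos : (0 : ℝ) < N := by exact_mod_cast Nat.pos_of_ne_zero (by omega)
  have hq : (0:ℝ) < c / N := div_pos hc hNpos
  rw [show (-(3:ℝ)/2) = -((3:ℝ)/2) by ring, Real.rpow_neg hNpos.le,
    ← div_eq_mul_inv, ← Real.div_rpow hc.le hNpos.le,
    show ((3:ℝ)/2) = 1 + 1/2 by norm_num, Real.rpow_add hq, Real.rpow_one,
    Real.sqrt_eq_rpow]

set_option maxHeartbeats 1000000 in
/-- Suppose `c ∈ (0,1)`, off-diagonal entries of `A` lie in `[c, c⁻¹]`
and columns of `A` sum to zero. With `X = e_i`,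
`ψ := diag(AX) − A·diag(X) − diag(X)·Aᵀ` and `‖z‖_X := √(zᵀψz)`, if `‖z‖_X ≠ 0`,
`0 < ε < c^{3/2} N^{−3/2}`, and `zᵀ ψ e_j ≥ −ε‖z‖_X` for all `j`, then
`zᵀ ψ X ≤ −ε‖z‖_X`. -/
theorem stmt_8 (N : ℕ) (hN : 1 ≤ N) (c : ℝ) (hc : c ∈ Set.Ioo (0 : ℝ) 1)
    (A : Matrix (Fin N) (Fin N) ℝ)
    (hbound : ∀ j k : Fin N, j ≠ k → A j k ∈ Set.Icc c c⁻¹)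
    (hcol : ∀ i : Fin N, ∑ k : Fin N, A k i = 0)
    (i : Fin N) (X : Fin N → ℝ) (hX : X = Pi.single i 1)
    (ψ : Matrix (Fin N) (Fin N) ℝ)
    (hψ : ψ = Matrix.diagonal (A.mulVec X) - A * Matrix.diagonal X - Matrix.diagonal X * Aᵀ)
    (z : Fin N → ℝ) (hz : Real.sqrt (z ⬝ᵥ ψ.mulVec z) ≠ 0)
    (ε : ℝ) (hε0 : 0 < ε)
    (hε1 : ε < c ^ ((3 : ℝ) / 2) * (N : ℝ) ^ (-(3 : ℝ) / 2))
    (hj : ∀ j : Fin N,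
      z ⬝ᵥ ψ.mulVec (Pi.single j 1) ≥ -ε * Real.sqrt (z ⬝ᵥ ψ.mulVec z)) :
    z ⬝ᵥ ψ.mulVec X ≤ -ε * Real.sqrt (z ⬝ᵥ ψ.mulVec z) := by
  obtain ⟨hc0, hc1⟩ := hc
  have hNpos : (0 : ℝ) < N := by exact_mod_cast Nat.pos_of_ne_zero (by omega)
  subst hX hψ
  have key := quad_form A i (hcol i) z
  set a : Fin N → ℝ := fun j => A j i with ha
  set w : Fin N → ℝ := fun j => z j - z i with hw
  set S := Real.sqrt (z ⬝ᵥ ((Matrix.diagonal (A.mulVec (Pi.single i 1))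
    - A * Matrix.diagonal (Pi.single i 1)
    - Matrix.diagonal (Pi.single i 1) * Aᵀ).mulVec z)) with hS
  have hTz : z ⬝ᵥ ((Matrix.diagonal (A.mulVec (Pi.single i 1))
      - A * Matrix.diagonal (Pi.single i 1)
      - Matrix.diagonal (Pi.single i 1) * Aᵀ).mulVec z) = ∑ j, a j * w j ^ 2 := by
    rw [key z]; exact Finset.sum_congr rfl fun j _ => by ring
  set T := ∑ j, a j * w j ^ 2 with hT
  have hTpos : 0 < T := by
    by_contra h
    apply hz
    rw [hS, hTz]
    exact Real.sqrt_eq_zero'.mpr (not_lt.mp h)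
  have hSval : S = Real.sqrt T := by rw [hS, hTz]
  have hSpos : 0 < S := by rw [hSval]; exact Real.sqrt_pos.mpr hTpos
  have hS2 : S ^ 2 = T := by rw [hSval, Real.sq_sqrt hTpos.le]
  -- formula for single basis vectors
  have hsingle : ∀ j : Fin N, j ≠ i →
      z ⬝ᵥ ((Matrix.diagonal (A.mulVec (Pi.single i 1))
      - A * Matrix.diagonal (Pi.single i 1)
      - Matrix.diagonal (Pi.single i 1) * Aᵀ).mulVec (Pi.single j 1)) = a j * w j := by
    intro j hji
    rw [key (Pi.single j 1)]
    have hterm : ∀ k : Fin N, a k * w k * ((Pi.single j 1 : Fin N → ℝ) k - (Pi.single j 1 : Fin N → ℝ) i)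
        = if k = j then a j * w j else 0 := by
      intro k
      by_cases h : k = j
      · subst h; simp [Pi.single_apply, Ne.symm hji]
      · simp [Pi.single_apply, h, Ne.symm hji]
    simp only [ha, hw] at hterm ⊢
    simp_rw [hterm]
    simp
  -- lower bound for every coordinate
  have hlow : ∀ k : Fin N, -ε * S ≤ a k * w k := by
    intro k
    by_cases h : k = i
    · subst h
      have h0 : a k * w k = 0 := by simp [hw]
      rw [h0]
      nlinarith [mul_pos hε0 hSpos]
    · have := hj k
      rwa [hsingle k h] at this
  -- pigeonhole
  have hpig : ∃ j : Fin N, T / N ≤ a j * w j ^ 2 := by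
    by_contra h
    push_neg at h
    have hlt : T < T := by
      calc T = ∑ j, a j * w j ^ 2 := hT
        _ < ∑ _j : Fin N, T / N := Finset.sum_lt_sum_of_nonempty
            (Finset.univ_nonempty_iff.mpr (Fin.pos_iff_nonempty.mp (by omega))) (fun j _ => h j)
        _ = N * (T / N) := by simp [Finset.sum_const, Finset.card_univ, mul_comm]
        _ = T := by field_simp
    exact lt_irrefl _ hlt
  obtain ⟨j, hjbig⟩ := hpig
  have hTN : 0 < T / N := div_pos hTpos hNpos
  have hji : j ≠ i := by
    intro h
    rw [h] at hjbig
    simp [hw] at hjbig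
    linarith
  obtain ⟨hcj, hcj'⟩ := hbound j i hji
  have haj : 0 < a j := lt_of_lt_of_le hc0 hcj
  have hw2 : c * (T / N) ≤ w j ^ 2 := by
    have h1 : a j * w j ^ 2 ≤ c⁻¹ * w j ^ 2 :=
      mul_le_mul_of_nonneg_right hcj' (sq_nonneg _)
    have h2 : T / N ≤ c⁻¹ * w j ^ 2 := le_trans hjbig h1
    calc c * (T / N) ≤ c * (c⁻¹ * w j ^ 2) := by nlinarith
      _ = w j ^ 2 := by field_simp
  set t := Real.sqrt (c / N) with ht
  have htpos : 0 < t := Real.sqrt_pos.mpr (div_pos hc0 hNpos)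
  have ht2 : t ^ 2 = c / N := Real.sq_sqrt (div_pos hc0 hNpos).le
  have hε1' : ε < (c / N) * t := by rwa [rpow_eq' hc0 hN] at hε1
  have hwts : t * S ≤ |w j| := by
    have h1 : (t * S) ^ 2 ≤ w j ^ 2 := by
      rw [mul_pow, ht2, hS2]
      calc c / N * T = c * (T / N) := by ring
        _ ≤ w j ^ 2 := hw2
    nlinarith [abs_nonneg (w j), mul_pos htpos hSpos, sq_abs (w j)]
  have hcNt : c / N * t ≤ c * t := by
    have hN1 : (1 : ℝ) ≤ N := by exact_mod_cast hN
    have h2 : c / N ≤ c := by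
      rw [div_le_iff₀ hNpos]
      nlinarith
    exact mul_le_mul_of_nonneg_right h2 htpos.le
  have hwj : 0 < w j := by
    rcases lt_trichotomy (w j) 0 with hneg | h0 | hpos
    · exfalso
      have habs : |w j| = -w j := abs_of_neg hneg
      rw [habs] at hwts
      have h1 : a j * w j ≤ c * w j := by nlinarith
      have h2 : c * w j ≤ -(c * (t * S)) := by nlinarith
      have h3 := hlow j
      -- -ε*S ≤ a j * w j ≤ -(c*t*S), so c*t ≤ ε, but ε < (c/N)*t ≤ c*t
      nlinarith
    · exfalso; rw [h0] at hw2; nlinarith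
    · exact hpos
  have hbig : c * (t * S) ≤ a j * w j := by
    rw [abs_of_pos hwj] at hwts
    nlinarith
  -- formula for X = e_i
  have hXform : z ⬝ᵥ ((Matrix.diagonal (A.mulVec (Pi.single i 1))
      - A * Matrix.diagonal (Pi.single i 1)
      - Matrix.diagonal (Pi.single i 1) * Aᵀ).mulVec (Pi.single i 1))
      = -∑ k, a k * w k := by
    rw [key (Pi.single i 1)]
    rw [← Finset.sum_neg_distrib]
    refine Finset.sum_congr rfl fun k _ => ?_
    by_cases h : k = i
    · subst h; simp [hw]
    · simp [Pi.single_apply, h, ha, hw]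
  rw [hXform]
  -- sum lower bound
  have hNε : (N : ℝ) * ε < c * t := by
    have h1 : (N : ℝ) * ε < (N : ℝ) * ((c / N) * t) :=
      mul_lt_mul_of_pos_left hε1' hNpos
    calc (N : ℝ) * ε < (N : ℝ) * ((c / N) * t) := h1
      _ = c * t := by field_simp
  have hcard : ((Finset.univ.erase j).card : ℝ) = (N : ℝ) - 1 := by
    rw [Finset.card_erase_of_mem (Finset.mem_univ j)]
    simp [Finset.card_univ]
    rw [Nat.cast_sub hN]
    simp
  have hsum : c * (t * S) + ((N : ℝ) - 1) * (-ε * S) ≤ ∑ k, a k * w k := by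
    rw [← Finset.add_sum_erase _ _ (Finset.mem_univ j)]
    have h1 : ∑ k ∈ Finset.univ.erase j, (-ε * S) ≤ ∑ k ∈ Finset.univ.erase j, a k * w k :=
      Finset.sum_le_sum (fun k _ => hlow k)
    have h2 : ∑ k ∈ Finset.univ.erase j, (-ε * S) = ((N : ℝ) - 1) * (-ε * S) := by
      rw [Finset.sum_const, nsmul_eq_mul, hcard]
    linarith
  have hfin : (N : ℝ) * ε * S ≤ c * t * S :=
    mul_le_mul_of_nonneg_right hNε.le hSpos.le
  nlinarith [hsum, hfin]
end

section
/- Let N ≥ 1, let c ∈ (0,1), and let A = [a_{jk}] be a real N×N matrix with a_{jk} ∈ [c, c⁻¹] for all j ≠ k and each column summing to zero (Σ_k a_{ki} = 0 for every i). Fix an index i and let ψ := diag(A e_i) − A·diag(e_i) − diag(e_i)·Aᵀ. Then for every z ∈ ℝ^N, c·Σ_{k ≠ i}(z_k − z_i)² ≤ zᵀ ψ z ≤ c⁻¹·Σ_{k ≠ i}(z_k − z_i)². -/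
open Matrix

/-- With `c ∈ (0,1)`, off-diagonal entries of `A` in `[c, c⁻¹]` and
columns of `A` summing to zero, for `ψ := diag(A e_i) − A·diag(e_i) − diag(e_i)·Aᵀ`
and every `z ∈ ℝ^N`:
`c·Σ_{k ≠ i}(z_k − z_i)² ≤ zᵀ ψ z ≤ c⁻¹·Σ_{k ≠ i}(z_k − z_i)²`. -/
theorem stmt_10 (N : ℕ) (hN : 1 ≤ N) (c : ℝ) (hc : c ∈ Set.Ioo (0 : ℝ) 1)
    (A : Matrix (Fin N) (Fin N) ℝ)
    (hbound : ∀ j k : Fin N, j ≠ k → A j k ∈ Set.Icc c c⁻¹)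
    (hcol : ∀ i : Fin N, ∑ k : Fin N, A k i = 0)
    (i : Fin N) (X : Fin N → ℝ) (hX : X = Pi.single i 1)
    (ψ : Matrix (Fin N) (Fin N) ℝ)
    (hψ : ψ = Matrix.diagonal (A.mulVec X) - A * Matrix.diagonal X - Matrix.diagonal X * Aᵀ) :
    ∀ z : Fin N → ℝ,
      c * ∑ k ∈ Finset.univ.filter (· ≠ i), (z k - z i) ^ 2 ≤ z ⬝ᵥ ψ.mulVec z ∧
      z ⬝ᵥ ψ.mulVec z ≤ c⁻¹ * ∑ k ∈ Finset.univ.filter (· ≠ i), (z k - z i) ^ 2 := by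
  intro z
  have h0 := hcol i
  have key : z ⬝ᵥ ψ.mulVec z = ∑ k ∈ Finset.univ.filter (· ≠ i), A k i * (z k - z i) ^ 2 := by
    have hfull : z ⬝ᵥ ψ.mulVec z = ∑ k : Fin N, A k i * (z k - z i) ^ 2 := by
      subst hψ hX
      simp only [dotProduct, mulVec, Matrix.sub_apply, Matrix.mul_apply,
        Matrix.diagonal_apply, Matrix.transpose_apply, Pi.single_apply,
        mul_ite, ite_mul, mul_zero, zero_mul, mul_one, one_mul]
      simp only [Finset.sum_ite_eq, Finset.sum_ite_eq', Finset.mem_univ, if_true]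
      have e1 : ∀ x : Fin N, (∑ x1 : Fin N,
          (((if x = x1 then A x i else 0) - (if x1 = i then A x x1 else 0)) -
            (if x = i then A x1 x else 0)) * z x1)
          = A x i * z x - A x i * z i - (if x = i then ∑ x1, A x1 x * z x1 else 0) := by
        intro x
        simp only [sub_mul, Finset.sum_sub_distrib, ite_mul, zero_mul,
          Finset.sum_ite_eq, Finset.sum_ite_eq', Finset.mem_univ, if_true]
        congr 1
        split <;> simp
      simp only [e1, mul_sub, mul_ite, mul_zero, Finset.sum_sub_distrib,
        Finset.sum_ite_eq', Finset.mem_univ, if_true]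
      have expand : ∑ k : Fin N, A k i * (z k - z i)^2
          = ∑ k, (A k i * z k ^ 2 - 2 * z i * (A k i * z k) + z i ^ 2 * A k i) :=
        Finset.sum_congr rfl (fun k _ => by ring)
      rw [expand, Finset.sum_add_distrib, Finset.sum_sub_distrib, ← Finset.mul_sum,
        ← Finset.mul_sum, h0, mul_zero, add_zero]
      have e2 : ∀ x : Fin N, z x * (A x i * z x) = A x i * z x ^ 2 := fun x => by ring
      have e3 : ∀ x : Fin N, z x * (A x i * z i) = z i * (A x i * z x) := fun x => by ring
      simp only [e2, e3]
      rw [← Finset.mul_sum]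
      have e4 : ∀ x : Fin N, A x i * z x = z x * A x i := fun x => by ring
      simp only [e4]
      ring
    rw [hfull]
    rw [← Finset.sum_filter_add_sum_filter_not Finset.univ (· ≠ i)]
    have : ∑ k ∈ Finset.univ.filter (fun k => ¬ k ≠ i), A k i * (z k - z i) ^ 2 = 0 := by
      apply Finset.sum_eq_zero
      intro k hk
      simp only [Finset.mem_filter, not_not] at hk
      rw [hk.2]
      ring
    rw [this, add_zero]
  rw [key]
  constructor
  · rw [Finset.mul_sum]
    apply Finset.sum_le_sum
    intro k hk
    simp only [Finset.mem_filter] at hk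
    have hb := hbound k i hk.2
    have hsq : (0:ℝ) ≤ (z k - z i) ^ 2 := sq_nonneg _
    nlinarith [hb.1, hb.2]
  · rw [Finset.mul_sum]
    apply Finset.sum_le_sum
    intro k hk
    simp only [Finset.mem_filter] at hk
    have hb := hbound k i hk.2
    have hsq : (0:ℝ) ≤ (z k - z i) ^ 2 := sq_nonneg _
    nlinarith [hb.1, hb.2]
end

section
/- Let Ω be a nonempty set and let H be an ℝ-linear subspace of the functions Ω → ℝ that contains all constant functions. Let 𝔼 : H → ℝ be a sublinear expectation, i.e. 𝔼 is monotone (X ≤ Y pointwise implies 𝔼(X) ≤ 𝔼(Y)), constant-preserving (𝔼(c·𝟙) = c for all c ∈ ℝ), subadditive (𝔼(X+Y) ≤ 𝔼(X)+𝔼(Y)), and positively homogeneous (𝔼(λX) = λ𝔼(X) for all λ ≥ 0). Then: (a) for every X₀ ∈ H there exists a linear functional ℓ : H → ℝ with ℓ(X) ≤ 𝔼(X) for all X ∈ H and ℓ(X₀) = 𝔼(X₀); and (b) every linear functional ℓ : H → ℝ dominated by 𝔼 (ℓ ≤ 𝔼 on H) is monotone and constant-preserving, i.e. is a linear expectation.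 -/
/-- Let `H` be a linear subspace of functions `Ω → ℝ` containing the
constants, and `𝔼 : H → ℝ` a sublinear expectation (monotone, constant-preserving,
subadditive, positively homogeneous). Then (a) for every `X₀ ∈ H` there is a linear
functional `ℓ` on `H` dominated by `𝔼` with `ℓ(X₀) = 𝔼(X₀)`, and (b) every linear
functional dominated by `𝔼` is monotone and constant-preserving (a linear
expectation). -/
theorem stmt_11 (Ω : Type) [Nonempty Ω] (H : Submodule ℝ (Ω → ℝ))
    (hconst : ∀ c : ℝ, (fun _ : Ω => c) ∈ H)
    (E : H → ℝ)
    (hmono : ∀ X Y : H, (∀ ω : Ω, (X : Ω → ℝ) ω ≤ (Y : Ω → ℝ) ω) → E X ≤ E Y)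
    (hconstpres : ∀ c : ℝ, E ⟨fun _ : Ω => c, hconst c⟩ = c)
    (hsubadd : ∀ X Y : H, E (X + Y) ≤ E X + E Y)
    (hposhom : ∀ (l : ℝ) (X : H), 0 ≤ l → E (l • X) = l * E X) :
    (∀ X₀ : H, ∃ ℓ : H →ₗ[ℝ] ℝ, (∀ X : H, ℓ X ≤ E X) ∧ ℓ X₀ = E X₀) ∧
    (∀ ℓ : H →ₗ[ℝ] ℝ, (∀ X : H, ℓ X ≤ E X) →
      ((∀ X Y : H, (∀ ω : Ω, (X : Ω → ℝ) ω ≤ (Y : Ω → ℝ) ω) → ℓ X ≤ ℓ Y) ∧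
       (∀ c : ℝ, ℓ ⟨fun _ : Ω => c, hconst c⟩ = c))) := by
  have hE0 : E 0 = 0 := by
    have := hposhom 0 0 le_rfl
    simpa using this
  -- key: t * E X₀ ≤ E (t • X₀) for all t
  have key : ∀ (t : ℝ) (X₀ : H), t * E X₀ ≤ E (t • X₀) := by
    intro t X₀
    rcases le_or_gt 0 t with ht | ht
    · rw [hposhom t X₀ ht]
    · have h1 : E (t • X₀) + (-t) * E X₀ ≥ 0 := by
        have h2 : E (t • X₀ + (-t) • X₀) ≤ E (t • X₀) + E ((-t) • X₀) :=
          hsubadd _ _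
        rw [hposhom (-t) X₀ (by linarith)] at h2
        have h3 : t • X₀ + (-t) • X₀ = 0 := by
          rw [← add_smul]; simp
        rw [h3, hE0] at h2
        linarith
      linarith
  constructor
  · intro X₀
    have hcond : ∀ c : ℝ, c • X₀ = 0 → c • (E X₀) = 0 := by
      intro c hc
      rcases eq_or_ne c 0 with h | h
      · simp [h]
      · have hX0 : X₀ = 0 := by
          have := congrArg (fun z => c⁻¹ • z) hc
          simpa [smul_smul, inv_mul_cancel₀ h] using this
        simp [hX0, hE0]
    set f : H →ₗ.[ℝ] ℝ := LinearPMap.mkSpanSingleton' X₀ (E X₀) hcond with hf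
    have hdom : ∀ x : f.domain, f x ≤ E x := by
      rintro ⟨x, hx⟩
      obtain ⟨t, ht⟩ := Submodule.mem_span_singleton.1 hx
      have : f ⟨t • X₀, ht ▸ hx⟩ = t • (E X₀) :=
        LinearPMap.mkSpanSingleton'_apply X₀ (E X₀) hcond t _
      subst ht
      rw [this, smul_eq_mul]
      exact key t X₀
    obtain ⟨g, hg1, hg2⟩ := exists_extension_of_le_sublinear f E
      (fun c hc X => hposhom c X hc.le) hsubadd hdom
    refine ⟨g, hg2, ?_⟩
    have hX₀mem : X₀ ∈ f.domain := Submodule.mem_span_singleton_self X₀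
    have := hg1 ⟨X₀, hX₀mem⟩
    rw [this]
    exact LinearPMap.mkSpanSingleton'_apply_self X₀ (E X₀) hcond _
  · intro ℓ hℓ
    have hmonoℓ : ∀ X Y : H, (∀ ω : Ω, (X : Ω → ℝ) ω ≤ (Y : Ω → ℝ) ω) → ℓ X ≤ ℓ Y := by
      intro X Y hXY
      have h1 : ℓ (X - Y) ≤ E (X - Y) := hℓ _
      have h2 : E (X - Y) ≤ E 0 := by
        apply hmono
        intro ω
        have := hXY ω
        simp only [Submodule.coe_sub, Pi.sub_apply, Submodule.coe_zero, Pi.zero_apply]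
        linarith
      rw [hE0] at h2
      have := map_sub ℓ X Y
      rw [this] at h1
      linarith
    refine ⟨hmonoℓ, fun c => ?_⟩
    have h1 : ℓ ⟨fun _ : Ω => c, hconst c⟩ ≤ c := by
      have := hℓ ⟨fun _ : Ω => c, hconst c⟩
      rwa [hconstpres c] at this
    have h2 : ℓ (-⟨fun _ : Ω => c, hconst c⟩) ≤ -c := by
      have hneg : (-(⟨fun _ : Ω => c, hconst c⟩ : H)) = ⟨fun _ : Ω => -c, hconst (-c)⟩ := by
        ext ω; simp
      rw [hneg]
      have := hℓ ⟨fun _ : Ω => -c, hconst (-c)⟩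
      rwa [hconstpres (-c)] at this
    rw [map_neg] at h2
    linarith
end

section
/- Let Ω be a nonempty set and let H be an ℝ-linear subspace of the functions Ω → ℝ that contains all constant functions. A functional 𝔼 : H → ℝ is a sublinear expectation (monotone, constant-preserving, subadditive, positively homogeneous) if and only if there exists a nonempty family {𝔼_θ}_{θ∈Θ} of linear expectations on H (each a monotone, constant-preserving linear functional ℓ : H → ℝ) such that 𝔼(X) = sup_{θ∈Θ} 𝔼_θ(X) for every X ∈ H. -/
/-- A functional `𝔼 : H → ℝ` on a linear subspace `H` of functions
`Ω → ℝ` containing the constants is a sublinear expectation (monotone,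
constant-preserving, subadditive, positively homogeneous) iff there exists a
nonempty family of linear expectations `{𝔼_θ}` on `H` (monotone, constant-preserving
linear functionals) with `𝔼(X) = sup_θ 𝔼_θ(X)` for every `X ∈ H`. -/
theorem stmt_12 (Ω : Type) [Nonempty Ω] (H : Submodule ℝ (Ω → ℝ))
    (hconst : ∀ c : ℝ, (fun _ : Ω => c) ∈ H)
    (E : H → ℝ) :
    ((∀ X Y : H, (∀ ω : Ω, (X : Ω → ℝ) ω ≤ (Y : Ω → ℝ) ω) → E X ≤ E Y) ∧
     (∀ c : ℝ, E ⟨fun _ : Ω => c, hconst c⟩ = c) ∧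
     (∀ X Y : H, E (X + Y) ≤ E X + E Y) ∧
     (∀ (l : ℝ) (X : H), 0 ≤ l → E (l • X) = l * E X)) ↔
    (∃ (Θ : Type) (_ : Nonempty Θ) (L : Θ → (H →ₗ[ℝ] ℝ)),
      (∀ θ : Θ,
        (∀ X Y : H, (∀ ω : Ω, (X : Ω → ℝ) ω ≤ (Y : Ω → ℝ) ω) → L θ X ≤ L θ Y) ∧
        (∀ c : ℝ, L θ ⟨fun _ : Ω => c, hconst c⟩ = c)) ∧
      (∀ X : H, IsLUB (Set.range fun θ : Θ => L θ X) (E X))) := by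
  have hzero : (⟨fun _ : Ω => (0 : ℝ), hconst 0⟩ : H) = 0 := rfl
  constructor
  · rintro ⟨hmono, hc, hadd, hhom⟩
    have hE0 : E 0 = 0 := by rw [← hzero, hc]
    -- key: for each X₀ there is a dominated linear functional attaining E at X₀
    have key : ∀ X₀ : H, ∃ g : H →ₗ[ℝ] ℝ, (∀ Y, g Y ≤ E Y) ∧ g X₀ = E X₀ := by
      intro X₀
      have Hc : ∀ c : ℝ, c • X₀ = 0 → c • (E X₀) = 0 := by
        intro c hcX
        rcases eq_or_ne c 0 with rfl | hc0
        · simp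
        · have hX0 : X₀ = 0 := by
            have := congrArg (fun y => c⁻¹ • y) hcX
            simpa [smul_smul, inv_mul_cancel₀ hc0] using this
          subst hX0; simp [hE0]
      set f := LinearPMap.mkSpanSingleton' (σ := RingHom.id ℝ) X₀ (E X₀) Hc with hf
      -- every element of the domain is dominated
      have hfle : ∀ x : f.domain, f x ≤ E x := by
        intro x
        have hx : (x : H) ∈ (Submodule.span ℝ {X₀} : Submodule ℝ H) := x.2
        obtain ⟨c, hcx⟩ := Submodule.mem_span_singleton.1 hx
        have hxeq : x = ⟨c • X₀, hcx ▸ x.2⟩ := Subtype.ext hcx.symm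
        rw [hxeq]
        rw [LinearPMap.mkSpanSingleton'_apply]
        have hgoal : c * E X₀ ≤ E (c • X₀) := by
          rcases le_or_gt 0 c with hcpos | hcneg
          · rw [hhom c X₀ hcpos]
          · have h1 : E ((-c) • X₀) = (-c) * E X₀ := hhom _ _ (by linarith)
            have h2 : E 0 ≤ E (c • X₀) + E ((-c) • X₀) := by
              have : (0 : H) = c • X₀ + (-c) • X₀ := by
                rw [← add_smul]; simp
              rw [this]; exact hadd _ _
            rw [hE0, h1] at h2
            nlinarith
        simpa using hgoal
      obtain ⟨g, hgf, hgle⟩ := exists_extension_of_le_sublinear f (fun Y => E Y)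
        (fun c hc x => hhom c x hc.le) (fun x y => hadd x y) hfle
      refine ⟨g, hgle, ?_⟩
      have hXmem : X₀ ∈ f.domain := by
        rw [hf, LinearPMap.domain_mkSpanSingleton]
        exact Submodule.mem_span_singleton_self X₀
      have := hgf ⟨X₀, hXmem⟩
      rw [LinearPMap.mkSpanSingleton'_apply_self] at this
      exact this
    refine ⟨H, ⟨0⟩, fun X₀ => (key X₀).choose, fun θ => ⟨?_, ?_⟩, fun X => ⟨?_, ?_⟩⟩
    · -- monotone
      intro X Y hXY
      show (key θ).choose X ≤ (key θ).choose Y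
      have h1 : (key θ).choose (X - Y) ≤ E (X - Y) := (key θ).choose_spec.1 _
      have h2 : E (X - Y) ≤ E 0 := by
        apply hmono
        intro ω
        have : (X : Ω → ℝ) ω - (Y : Ω → ℝ) ω ≤ 0 := by linarith [hXY ω]
        simpa using this
      have h3 : (key θ).choose (X - Y) = (key θ).choose X - (key θ).choose Y :=
        map_sub _ _ _
      rw [hE0] at h2
      linarith [h1, h2, h3]
    · -- constant preserving
      intro c
      show (key θ).choose ⟨fun _ : Ω => c, hconst c⟩ = c
      have hle : (key θ).choose ⟨fun _ : Ω => c, hconst c⟩ ≤ c := by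
        have := (key θ).choose_spec.1 ⟨fun _ : Ω => c, hconst c⟩
        rwa [hc c] at this
      have hneg : (⟨fun _ : Ω => -c, hconst (-c)⟩ : H) =
          -(⟨fun _ : Ω => c, hconst c⟩ : H) := rfl
      have hge : (key θ).choose ⟨fun _ : Ω => -c, hconst (-c)⟩ ≤ -c := by
        have := (key θ).choose_spec.1 ⟨fun _ : Ω => -c, hconst (-c)⟩
        rwa [hc (-c)] at this
      rw [hneg, map_neg] at hge
      linarith
    · -- E X is an upper bound
      rintro _ ⟨θ, rfl⟩
      exact (key θ).choose_spec.1 X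
    · -- E X is the least upper bound
      intro b hb
      have := hb ⟨X, rfl⟩
      change (key X).choose X ≤ b at this
      rwa [(key X).choose_spec.2] at this
  · rintro ⟨Θ, hΘ, L, hL, hlub⟩
    obtain ⟨θ₀⟩ := hΘ
    have hE0 : E 0 = 0 := by
      refine le_antisymm ((hlub 0).2 ?_) ?_
      · rintro _ ⟨θ, rfl⟩; simp
      · have := (hlub 0).1 ⟨θ₀, rfl⟩
        simpa using this
    refine ⟨?_, ?_, ?_, ?_⟩
    · intro X Y hXY
      apply (hlub X).2
      rintro _ ⟨θ, rfl⟩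
      exact ((hL θ).1 X Y hXY).trans ((hlub Y).1 ⟨θ, rfl⟩)
    · intro c
      refine le_antisymm ((hlub _).2 ?_) ?_
      · rintro _ ⟨θ, rfl⟩
        show (L θ) ⟨fun _ : Ω => c, hconst c⟩ ≤ c
        rw [(hL θ).2 c]
      · have := (hlub ⟨fun _ : Ω => c, hconst c⟩).1 ⟨θ₀, rfl⟩
        change (L θ₀) ⟨fun _ : Ω => c, hconst c⟩ ≤ _ at this
        rwa [(hL θ₀).2 c] at this
    · intro X Y
      apply (hlub (X + Y)).2
      rintro _ ⟨θ, rfl⟩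
      show (L θ) (X + Y) ≤ E X + E Y
      rw [map_add]
      exact add_le_add ((hlub X).1 ⟨θ, rfl⟩) ((hlub Y).1 ⟨θ, rfl⟩)
    · intro l X hl
      rcases eq_or_lt_of_le hl with rfl | hlpos
      · simp [hE0]
      · have h1 : IsLUB ((fun r => l * r) '' (Set.range fun θ : Θ => L θ X))
            (l * E X) := by
          constructor
          · rintro _ ⟨r, hr, rfl⟩
            exact mul_le_mul_of_nonneg_left ((hlub X).1 hr) hl
          · intro b hb
            have hb' : E X ≤ b / l := by
              apply (hlub X).2
              rintro _ ⟨θ, rfl⟩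
              have := hb ⟨(L θ) X, ⟨θ, rfl⟩, rfl⟩
              exact (le_div_iff₀' hlpos).2 this
            calc l * E X ≤ l * (b / l) := mul_le_mul_of_nonneg_left hb' hl
              _ = b := by field_simp
        have h2 : ((fun r => l * r) '' (Set.range fun θ : Θ => L θ X)) =
            Set.range fun θ : Θ => L θ (l • X) := by
          ext r
          simp only [Set.mem_image, Set.mem_range]
          constructor
          · rintro ⟨_, ⟨θ, rfl⟩, rfl⟩
            exact ⟨θ, by rw [map_smul, smul_eq_mul]⟩
          · rintro ⟨θ, rfl⟩
            exact ⟨L θ X, ⟨θ, rfl⟩, by rw [map_smul, smul_eq_mul]⟩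
        rw [h2] at h1
        exact (hlub (l • X)).unique h1
end

section
/- Let T > 0 and μ₀ > 0, and let (φ_n)_{n≥1} be a sequence of continuous nonnegative functions [0,T] → ℝ such that φ₁ is nonincreasing and, for every n ≥ 1 and every t ∈ [0,T], φ_{n+1}(t) ≤ μ₀ ∫_t^T e^{μ₀(s−t)} φ_n(s) ds. Then for every n ≥ 1 and every t ∈ [0,T], φ_{n+1}(t) ≤ ((T μ₀ e^{T μ₀})^n / n!) · φ₁(t). -/
set_option maxHeartbeats 1000000


/-- If `(φ_n)_{n ≥ 1}` are continuous nonnegative functions on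
`[0,T]`, `φ₁` is nonincreasing, and
`φ_{n+1}(t) ≤ μ₀ ∫_t^T e^{μ₀(s−t)} φ_n(s) ds` for all `n ≥ 1`, `t ∈ [0,T]`, then
`φ_{n+1}(t) ≤ ((T μ₀ e^{T μ₀})^n / n!) · φ₁(t)` for all `n ≥ 1`, `t ∈ [0,T]`. -/
theorem stmt_13 (T μ₀ : ℝ) (hT : 0 < T) (hμ₀ : 0 < μ₀)
    (φ : ℕ → ℝ → ℝ)
    (hcont : ∀ n : ℕ, 1 ≤ n → ContinuousOn (φ n) (Set.Icc 0 T))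
    (hnonneg : ∀ n : ℕ, 1 ≤ n → ∀ t ∈ Set.Icc (0 : ℝ) T, 0 ≤ φ n t)
    (hanti : AntitoneOn (φ 1) (Set.Icc 0 T))
    (hrec : ∀ n : ℕ, 1 ≤ n → ∀ t ∈ Set.Icc (0 : ℝ) T,
      φ (n + 1) t ≤ μ₀ * ∫ s in t..T, Real.exp (μ₀ * (s - t)) * φ n s) :
    ∀ n : ℕ, 1 ≤ n → ∀ t ∈ Set.Icc (0 : ℝ) T,
      φ (n + 1) t ≤ (T * μ₀ * Real.exp (T * μ₀)) ^ n / (Nat.factorial n : ℝ) * φ 1 t := by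
  set C := μ₀ * Real.exp (T * μ₀) with hC
  have hCpos : 0 < C := mul_pos hμ₀ (Real.exp_pos _)
  have key : ∀ n : ℕ, ∀ t ∈ Set.Icc (0 : ℝ) T,
      φ (n + 1) t ≤ C ^ n * (T - t) ^ n / (Nat.factorial n : ℝ) * φ 1 t := by
    intro n
    induction n with
    | zero => intro t ht; simp
    | succ n ih =>
      intro t ht
      obtain ⟨ht0, htT⟩ := ht
      have hφ1t : 0 ≤ φ 1 t := hnonneg 1 le_rfl t ⟨ht0, htT⟩
      set K : ℝ := Real.exp (T * μ₀) * C ^ n / (Nat.factorial n : ℝ) * φ 1 t with hK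
      have hmono : φ (n + 1 + 1) t ≤ μ₀ * ∫ s in t..T, Real.exp (μ₀ * (s - t)) * φ (n + 1) s :=
        hrec (n + 1) (Nat.le_add_left 1 n) t ⟨ht0, htT⟩
      have hint1 : IntervalIntegrable (fun s => Real.exp (μ₀ * (s - t)) * φ (n + 1) s)
          MeasureTheory.volume t T := by
        apply ContinuousOn.intervalIntegrable
        apply ContinuousOn.mul
        · exact (Real.continuous_exp.comp
            (continuous_const.mul (continuous_id.sub continuous_const))).continuousOn
        · apply (hcont (n + 1) (Nat.le_add_left 1 n)).mono
          rw [Set.uIcc_of_le htT]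
          exact Set.Icc_subset_Icc ht0 le_rfl
      have hint2 : IntervalIntegrable (fun s => K * (T - s) ^ n) MeasureTheory.volume t T := by
        apply Continuous.intervalIntegrable
        continuity
      have hptw : ∀ s ∈ Set.Icc t T,
          Real.exp (μ₀ * (s - t)) * φ (n + 1) s ≤ K * (T - s) ^ n := by
        intro s hs
        have hs0 : (0 : ℝ) ≤ s := le_trans ht0 hs.1
        have hsT : s ≤ T := hs.2
        have hTs : 0 ≤ T - s := by linarith
        have hexp : Real.exp (μ₀ * (s - t)) ≤ Real.exp (T * μ₀) := by
          apply Real.exp_le_exp.mpr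
          nlinarith
        have h1 : φ (n + 1) s ≤ C ^ n * (T - s) ^ n / (Nat.factorial n : ℝ) * φ 1 s :=
          ih s ⟨hs0, hsT⟩
        have h2 : φ 1 s ≤ φ 1 t := hanti ⟨ht0, htT⟩ ⟨hs0, hsT⟩ hs.1
        have hcoef : 0 ≤ C ^ n * (T - s) ^ n / (Nat.factorial n : ℝ) := by positivity
        have h3 : φ (n + 1) s ≤ C ^ n * (T - s) ^ n / (Nat.factorial n : ℝ) * φ 1 t :=
          h1.trans (by exact mul_le_mul_of_nonneg_left h2 hcoef)
        have hφns : 0 ≤ φ (n + 1) s := hnonneg (n + 1) (Nat.le_add_left 1 n) s ⟨hs0, hsT⟩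
        calc Real.exp (μ₀ * (s - t)) * φ (n + 1) s
            ≤ Real.exp (T * μ₀) * (C ^ n * (T - s) ^ n / (Nat.factorial n : ℝ) * φ 1 t) :=
              mul_le_mul hexp h3 hφns (Real.exp_pos _).le
          _ = K * (T - s) ^ n := by rw [hK]; ring
      have hIle : (∫ s in t..T, Real.exp (μ₀ * (s - t)) * φ (n + 1) s)
          ≤ ∫ s in t..T, K * (T - s) ^ n :=
        intervalIntegral.integral_mono_on htT hint1 hint2 hptw
      have hIval : (∫ s in t..T, K * (T - s) ^ n) = K * ((T - t) ^ (n + 1) / (n + 1)) := by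
        rw [intervalIntegral.integral_const_mul]
        have : (∫ s in t..T, (T - s) ^ n) = ∫ x in (T - T)..(T - t), x ^ n := by
          rw [intervalIntegral.integral_comp_sub_left (fun x : ℝ => x ^ n) T]
        rw [this, sub_self, integral_pow, zero_pow (Nat.succ_ne_zero n)]
        ring
      have hfinal : μ₀ * (K * ((T - t) ^ (n + 1) / (n + 1)))
          = C ^ (n + 1) * (T - t) ^ (n + 1) / (Nat.factorial (n + 1) : ℝ) * φ 1 t := by
        rw [hK, hC, Nat.factorial_succ]
        have hn : (0 : ℝ) < (n : ℝ) + 1 := by positivity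
        have hfac : (0 : ℝ) < (Nat.factorial n : ℝ) := by positivity
        push_cast
        field_simp
        ring
      calc φ (n + 1 + 1) t ≤ μ₀ * ∫ s in t..T, Real.exp (μ₀ * (s - t)) * φ (n + 1) s := hmono
        _ ≤ μ₀ * ∫ s in t..T, K * (T - s) ^ n := by
            exact mul_le_mul_of_nonneg_left hIle hμ₀.le
        _ = C ^ (n + 1) * (T - t) ^ (n + 1) / (Nat.factorial (n + 1) : ℝ) * φ 1 t := by
            rw [hIval, hfinal]
  intro n _ t ht
  obtain ⟨ht0, htT⟩ := ht
  have hφ1t : 0 ≤ φ 1 t := hnonneg 1 le_rfl t ⟨ht0, htT⟩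
  refine (key n t ⟨ht0, htT⟩).trans ?_
  have h1 : C ^ n * (T - t) ^ n ≤ (T * μ₀ * Real.exp (T * μ₀)) ^ n := by
    have h2 : (T - t) ^ n ≤ T ^ n := pow_le_pow_left₀ (by linarith) (by linarith) n
    calc C ^ n * (T - t) ^ n ≤ C ^ n * T ^ n := mul_le_mul_of_nonneg_left h2 (by positivity)
      _ = (T * μ₀ * Real.exp (T * μ₀)) ^ n := by rw [hC, ← mul_pow]; ring_nf
  gcongr
end
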